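/- arXiv:2004.05410 — 2 statements merged into one kernel-verified Lean document; each statement's English description precedes it below -/
import Mathlib

section
/- Let H be a k-vertex graph with at least one edge and no isolated vertices, and let H' be obtained from H by adding a dominating vertex v*. Then wt(H') = wt(H) + 2. -/
open SimpleGraph

/-- `H` has a copy in `G`: an injective graph homomorphism (i.e. a subgraph isomorphic to `H`). -/
def hasCopy {α β : Type*} (H : SimpleGraph α) (G : SimpleGraph β) : Prop :=
  ∃ f : H →g G, Function.Injective f

/-- `G` is `H`-saturated: `H`-free, and adding any missing edge creates a copy of `H`. -/
def isSat {α β : Type*} (H : SimpleGraph α) (G : SimpleGraph β) : Prop :=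
  ¬ hasCopy H G ∧ ∀ x y : β, x ≠ y → ¬ G.Adj x y →
    hasCopy H (G ⊔ SimpleGraph.fromEdgeSet {s(x, y)})

/-- The weight of an edge `uv`: with `deg u ≤ deg v`,
`wt(uv) = 2|N(u) ∩ N(v)| + |N(v) \ N(u)|`. -/
noncomputable def edgeWt {α : Type*} (H : SimpleGraph α) (u v : α) : ℕ :=
  if (H.neighborSet u).ncard ≤ (H.neighborSet v).ncard then
    2 * (H.neighborSet u ∩ H.neighborSet v).ncard + ((H.neighborSet v) \ (H.neighborSet u)).ncard
  else
    2 * (H.neighborSet u ∩ H.neighborSet v).ncard + ((H.neighborSet u) \ (H.neighborSet v)).ncard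

/-- The weight of a graph: the minimum weight of an edge. -/
noncomputable def graphWt {α : Type*} (H : SimpleGraph α) : ℕ :=
  sInf {w | ∃ u v, H.Adj u v ∧ w = edgeWt H u v}

/-- The saturation number: minimum number of edges of an `H`-saturated graph on `n` vertices. -/
noncomputable def satNum {α : Type*} (H : SimpleGraph α) (n : ℕ) : ℕ :=
  sInf {m | ∃ G : SimpleGraph (Fin n), isSat H G ∧ Nat.card G.edgeSet = m}

/-- The graph obtained from `H` by adding a dominating vertex (`none`). -/
def addDom {α : Type*} (H : SimpleGraph α) : SimpleGraph (Option α) :=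
  SimpleGraph.fromRel (fun x y => x = none ∨ ∃ u v, x = some u ∧ y = some v ∧ H.Adj u v)


section helpers

lemma edgeWt_comm {β : Type*} [Fintype β] (G : SimpleGraph β) (u v : β) :
    edgeWt G u v = edgeWt G v u := by
  have e1 := Set.ncard_inter_add_ncard_diff_eq_ncard (G.neighborSet u) (G.neighborSet v)
  have e2 := Set.ncard_inter_add_ncard_diff_eq_ncard (G.neighborSet v) (G.neighborSet u)
  rw [Set.inter_comm] at e2
  unfold edgeWt
  rcases lt_trichotomy (G.neighborSet u).ncard (G.neighborSet v).ncard with h|h|h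
  · rw [if_pos h.le, if_neg (not_le.2 h), Set.inter_comm]
  · rw [if_pos h.le, if_pos h.ge, Set.inter_comm]
    omega
  · rw [if_neg (not_le.2 h), if_pos h.le, Set.inter_comm]

lemma edgeWt_bound {α : Type*} [Fintype α] (H : SimpleGraph α) {u w : α} (h : H.Adj u w) :
    edgeWt H u w + 2 ≤ Fintype.card α + (H.neighborSet u).ncard := by
  have e1 := Set.ncard_inter_add_ncard_diff_eq_ncard (H.neighborSet u) (H.neighborSet w)
  have e2 := Set.ncard_inter_add_ncard_diff_eq_ncard (H.neighborSet w) (H.neighborSet u)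
  rw [Set.inter_comm] at e2
  have h1 : (H.neighborSet u ∩ H.neighborSet w).ncard + 1 ≤ (H.neighborSet u).ncard := by
    rw [← Set.ncard_insert_of_notMem (by simp [H.loopless.irrefl w] : w ∉ H.neighborSet u ∩ H.neighborSet w)]
    exact Set.ncard_le_ncard (by simp [Set.insert_subset_iff, h, Set.inter_subset_left]) (Set.toFinite _)
  have h1' : (H.neighborSet u ∩ H.neighborSet w).ncard + 1 ≤ (H.neighborSet w).ncard := by
    rw [← Set.ncard_insert_of_notMem (by simp [H.loopless.irrefl u] : u ∉ H.neighborSet u ∩ H.neighborSet w)]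
    exact Set.ncard_le_ncard (by simp [Set.insert_subset_iff, h.symm, Set.inter_subset_right]) (Set.toFinite _)
  have h2 : (H.neighborSet w).ncard + 1 ≤ Fintype.card α := by
    rw [← Set.ncard_insert_of_notMem (by simp : w ∉ H.neighborSet w)]
    calc _ ≤ (Set.univ : Set α).ncard := Set.ncard_le_ncard (by simp) (Set.toFinite _)
    _ = Fintype.card α := by rw [Set.ncard_univ, Nat.card_eq_fintype_card]
  have h2' : (H.neighborSet u).ncard + 1 ≤ Fintype.card α := by
    rw [← Set.ncard_insert_of_notMem (by simp : u ∉ H.neighborSet u)]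
    calc _ ≤ (Set.univ : Set α).ncard := Set.ncard_le_ncard (by simp) (Set.toFinite _)
    _ = Fintype.card α := by rw [Set.ncard_univ, Nat.card_eq_fintype_card]
  unfold edgeWt
  split <;> omega

variable {α : Type*} (H : SimpleGraph α)

lemma addDom_adj_some_some (u v : α) : (addDom H).Adj (some u) (some v) ↔ H.Adj u v := by
  simp [addDom, SimpleGraph.fromRel_adj]
  constructor
  · rintro ⟨h, h2 | h2⟩; exacts [h2, h2.symm]
  · intro h; exact ⟨fun he => H.loopless.irrefl u (by simpa [he] using h), Or.inl h⟩

lemma addDom_adj_none_some (u : α) : (addDom H).Adj none (some u) := by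
  simp [addDom, SimpleGraph.fromRel_adj]

lemma addDom_ns_none : (addDom H).neighborSet none = Set.range some := by
  ext x
  cases x with
  | none => simp [SimpleGraph.mem_neighborSet]
  | some u => simp [SimpleGraph.mem_neighborSet, addDom_adj_none_some]

lemma addDom_ns_some (u : α) :
    (addDom H).neighborSet (some u) = insert none (some '' H.neighborSet u) := by
  ext x
  cases x with
  | none => simp [SimpleGraph.mem_neighborSet, ((addDom H).adj_comm _ _).mp (addDom_adj_none_some H u)]
  | some v => simp [SimpleGraph.mem_neighborSet, addDom_adj_some_some]

lemma edgeWt_addDom_some [Fintype α] (u v : α) :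
    edgeWt (addDom H) (some u) (some v) = edgeWt H u v + 2 := by
  have hinj := Option.some_injective α
  have key : ∀ S : Set α, (insert (none : Option α) (some '' S)).ncard = S.ncard + 1 := by
    intro S
    rw [Set.ncard_insert_of_notMem (by simp), Set.ncard_image_of_injective _ hinj]
  have hIJ : ∀ S T : Set α, insert (none : Option α) (some '' S) ∩ insert none (some '' T)
      = insert none (some '' (S ∩ T)) := by
    intro S T; ext x; cases x <;> simp
  have hD : ∀ S T : Set α, insert (none : Option α) (some '' T) \ insert none (some '' S)
      = some '' (T \ S) := by
    intro S T; ext x; cases x <;> simp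
  simp only [edgeWt, addDom_ns_some, hIJ, hD, key, Set.ncard_image_of_injective _ hinj,
    add_le_add_iff_right]
  split <;> ring

lemma edgeWt_addDom_none [Fintype α] (u : α) :
    Fintype.card α + (H.neighborSet u).ncard ≤ edgeWt (addDom H) none (some u) := by
  have hinj := Option.some_injective α
  have hrange : ((addDom H).neighborSet none).ncard = Fintype.card α := by
    rw [addDom_ns_none, ← Set.image_univ, Set.ncard_image_of_injective _ hinj,
      Set.ncard_univ, Nat.card_eq_fintype_card]
  have hns : ((addDom H).neighborSet (some u)).ncard = (H.neighborSet u).ncard + 1 := by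
    rw [addDom_ns_some, Set.ncard_insert_of_notMem (by simp),
      Set.ncard_image_of_injective _ hinj]
  have hI : (addDom H).neighborSet none ∩ (addDom H).neighborSet (some u)
      = some '' H.neighborSet u := by
    rw [addDom_ns_none, addDom_ns_some]; ext x; cases x <;> simp
  have hD1 : (addDom H).neighborSet (some u) \ (addDom H).neighborSet none = {none} := by
    rw [addDom_ns_none, addDom_ns_some]; ext x; cases x <;> simp
  have hD2 : (addDom H).neighborSet none \ (addDom H).neighborSet (some u)
      = some '' (H.neighborSet u)ᶜ := by
    rw [addDom_ns_none, addDom_ns_some]; ext x; cases x <;> simp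
  have hcompl : (H.neighborSet u)ᶜ.ncard + (H.neighborSet u).ncard = Fintype.card α := by
    have := Set.ncard_add_ncard_compl (H.neighborSet u)
    rw [Nat.card_eq_fintype_card] at this
    omega
  unfold edgeWt
  rw [hI, hD1, hD2, hrange, hns, Set.ncard_image_of_injective _ hinj,
    Set.ncard_image_of_injective _ hinj, Set.ncard_singleton]
  have hle : (H.neighborSet u).ncard + 1 ≤ Fintype.card α := by
    rw [← Set.ncard_insert_of_notMem (by simp : u ∉ H.neighborSet u)]
    calc _ ≤ (Set.univ : Set α).ncard := Set.ncard_le_ncard (by simp) (Set.toFinite _)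
    _ = Fintype.card α := by rw [Set.ncard_univ, Nat.card_eq_fintype_card]
  split <;> omega

end helpers

/-- If the `k`-vertex graph graph `H` has an edge and no isolated vertices, then adding a
dominating vertex gives `wt(H') = wt(H) + 2`. -/
theorem stmt7 {α : Type*} [Fintype α] (H : SimpleGraph α) (k : ℕ) (hk : Fintype.card α = k)
    (hE : ∃ u v, H.Adj u v) (hiso : ∀ v : α, ∃ w, H.Adj v w) :
    graphWt (addDom H) = graphWt H + 2 := by
  unfold graphWt
  have hSne : {w | ∃ u v, H.Adj u v ∧ w = edgeWt H u v}.Nonempty := by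
    obtain ⟨u, v, h⟩ := hE; exact ⟨_, u, v, h, rfl⟩
  obtain ⟨a, b, hab, hWeq⟩ := Nat.sInf_mem hSne
  have key : ∀ u : α, sInf {w | ∃ u v, H.Adj u v ∧ w = edgeWt H u v} + 2
      ≤ Fintype.card α + (H.neighborSet u).ncard := by
    intro u
    obtain ⟨w', hw'⟩ := hiso u
    have h1 := edgeWt_bound H hw'
    have h2 : sInf {w | ∃ u v, H.Adj u v ∧ w = edgeWt H u v} ≤ edgeWt H u w' :=
      Nat.sInf_le ⟨u, w', hw', rfl⟩
    omega
  apply le_antisymm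
  · refine Nat.sInf_le ?_
    exact ⟨some a, some b, (addDom_adj_some_some H a b).mpr hab,
      by rw [edgeWt_addDom_some, ← hWeq]⟩
  · have hne : {w | ∃ x y, (addDom H).Adj x y ∧ w = edgeWt (addDom H) x y}.Nonempty :=
      ⟨_, some a, some b, (addDom_adj_some_some H a b).mpr hab, rfl⟩
    apply le_csInf hne
    rintro w ⟨x, y, hxy, rfl⟩
    match x, y with
    | none, none => exact absurd hxy ((addDom H).loopless.irrefl none)
    | none, some u => exact le_trans (key u) (edgeWt_addDom_none H u)
    | some u, none =>
        rw [edgeWt_comm]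
        exact le_trans (key u) (edgeWt_addDom_none H u)
    | some u, some v =>
        rw [edgeWt_addDom_some]
        have hm : edgeWt H u v ∈ {w | ∃ u v, H.Adj u v ∧ w = edgeWt H u v} :=
          ⟨u, v, (addDom_adj_some_some H u v).mp hxy, rfl⟩
        exact Nat.add_le_add_right (Nat.sInf_le hm) 2
end

section
/- Let H be a k-vertex graph with an isolated vertex u and wt(H) > k − 2 (or no edges), and let H' = H plus a dominating vertex v*. For any n ≥ k + 1, write n = qk + r with 0 ≤ r < k, and let G be the disjoint union of q copies of K_k and one copy of K_r. Then G is H'-saturated. -/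
open SimpleGraph

/-- The graph on `Fin n` consisting of blocks (cliques) of size `k`: for `n = q k + r`
with `0 <= r < k`, this is `q` disjoint copies of `K_k` together with one copy of `K_r`. -/
def blocksGraph (n k : ℕ) : SimpleGraph (Fin n) :=
  SimpleGraph.fromRel (fun x y => x.val / k = y.val / k)


lemma blocksGraph_adj' (n k : ℕ) (a b : Fin n) :
    (blocksGraph n k).Adj a b ↔ a ≠ b ∧ a.val / k = b.val / k := by
  constructor
  · rintro ⟨h, h1 | h1⟩ <;> exact ⟨h, by omega⟩
  · rintro ⟨h, h1⟩; exact ⟨h, Or.inl h1⟩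

lemma addDom_adj_none' {α : Type*} (H : SimpleGraph α) (a : α) :
    (addDom H).Adj none (some a) :=
  ⟨by simp, Or.inl (Or.inl rfl)⟩

lemma addDom_adj_some' {α : Type*} (H : SimpleGraph α) (a b : α)
    (h : (addDom H).Adj (some a) (some b)) : H.Adj a b := by
  rcases h with ⟨hne, h | h⟩ <;> rcases h with h | ⟨p, q, hp, hq, hpq⟩ <;>
    simp_all <;> subst_vars <;> first | exact hpq | exact hpq.symm

lemma key_copy {α : Type*} [Fintype α] (H : SimpleGraph α) (k : ℕ) (hk : Fintype.card α = k)
    (u : α) (hu : ∀ w, ¬ H.Adj u w) (n : ℕ)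
    (x y : Fin n) (hxy : x.val / k < y.val / k) :
    hasCopy (addDom H) (blocksGraph n k ⊔ SimpleGraph.fromEdgeSet {s(x, y)}) := by
  classical
  have hk0 : 0 < k := hk ▸ Fintype.card_pos_iff.mpr ⟨u⟩
  have hxk : x.val % k < k := Nat.mod_lt _ hk0
  have hblock : ∀ j, j < k → (x.val / k) * k + j < n := by
    intro j hj
    have h1 : (x.val / k + 1) * k ≤ (y.val / k) * k := Nat.mul_le_mul_right _ hxy
    have h2 : (y.val / k) * k ≤ y.val := Nat.div_mul_le_self _ _
    have h3 : y.val < n := y.isLt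
    nlinarith
  have hdiv : ∀ j, j < k → ((x.val / k) * k + j) / k = x.val / k := by
    intro j hj
    rw [mul_comm, Nat.mul_add_div hk0, Nat.div_eq_of_lt hj, add_zero]
  have hxval : (x.val / k) * k + x.val % k = x.val := by
    rw [mul_comm]; exact Nat.div_add_mod _ _
  have hne : x ≠ y := fun h => absurd hxy (by rw [h]; exact lt_irrefl _)
  have hdivne : x.val / k ≠ y.val / k := Nat.ne_of_lt hxy
  let e0 := Fintype.equivFinOfCardEq hk
  let e : α ≃ Fin k := e0.trans (Equiv.swap (e0 u) ⟨x.val % k, hxk⟩)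
  have heu : e u = ⟨x.val % k, hxk⟩ := by simp [e, Equiv.swap_apply_left]
  let f : Option α → Fin n := fun p => match p with
    | none => x
    | some a => if a = u then y else ⟨(x.val / k) * k + (e a).val, hblock _ (e a).isLt⟩
  have hfnone : f none = x := rfl
  have hfu : f (some u) = y := by simp [f]
  have hfa : ∀ a, a ≠ u → f (some a) = ⟨(x.val / k) * k + (e a).val, hblock _ (e a).isLt⟩ := by
    intro a ha; simp [f, ha]
  have hfadiv : ∀ a, a ≠ u → (f (some a)).val / k = x.val / k := by
    intro a ha; rw [hfa a ha]; exact hdiv _ (e a).isLt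
  have hfax : ∀ a, a ≠ u → f (some a) ≠ x := by
    intro a ha hc
    apply ha
    have hval : (f (some a)).val = (x.val / k) * k + (e a).val := by rw [hfa a ha]
    have hc' : (x.val / k) * k + (e a).val = x.val := by rw [← hval, hc]
    have hv : (e a).val = x.val % k := by omega
    have : e a = e u := by rw [heu]; exact Fin.ext hv
    exact e.injective this
  have hfay : ∀ a, a ≠ u → f (some a) ≠ y := by
    intro a ha hc
    exact hdivne (by rw [← hfadiv a ha, hc])
  have hinj : Function.Injective f := by
    intro p q hpq
    match p, q with
    | none, none => rfl
    | none, some a =>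
      by_cases ha : a = u
      · subst ha; rw [hfnone, hfu] at hpq; exact absurd hpq hne
      · exact absurd hpq.symm (hfax a ha)
    | some a, none =>
      by_cases ha : a = u
      · subst ha; rw [hfnone, hfu] at hpq; exact absurd hpq.symm hne
      · exact absurd hpq (hfax a ha)
    | some a, some b =>
      by_cases ha : a = u <;> by_cases hb : b = u
      · subst ha; subst hb; rfl
      · subst ha; rw [hfu] at hpq; exact absurd hpq.symm (hfay b hb)
      · subst hb; rw [hfu] at hpq; exact absurd hpq (hfay a ha)
      · rw [hfa a ha, hfa b hb] at hpq
        have : (e a).val = (e b).val := by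
          have := congrArg Fin.val hpq; simpa using this
        exact congrArg _ (e.injective (Fin.ext this))
  have hhom : ∀ p q, (addDom H).Adj p q →
      (blocksGraph n k ⊔ SimpleGraph.fromEdgeSet {s(x, y)}).Adj (f p) (f q) := by
    have hcore : ∀ a : α,
        (blocksGraph n k ⊔ SimpleGraph.fromEdgeSet {s(x, y)}).Adj x (f (some a)) := by
      intro a
      by_cases ha : a = u
      · subst ha; rw [hfu]
        exact Or.inr ⟨Set.mem_singleton _, hne⟩
      · left
        rw [blocksGraph_adj']
        exact ⟨(hfax a ha).symm, (hfadiv a ha).symm⟩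
    intro p q hpq
    match p, q with
    | none, none => exact absurd rfl hpq.ne
    | none, some a => exact hcore a
    | some a, none => exact (hcore a).symm
    | some a, some b =>
      have hab : H.Adj a b := addDom_adj_some' H a b hpq
      have ha : a ≠ u := fun h => hu b (h ▸ hab)
      have hb : b ≠ u := fun h => hu a (h ▸ hab.symm)
      left
      rw [blocksGraph_adj']
      refine ⟨?_, by rw [hfadiv a ha, hfadiv b hb]⟩
      intro hc
      exact hab.ne (Option.some_injective _ (hinj hc))
  exact ⟨⟨f, fun h => hhom _ _ h⟩, hinj⟩

lemma freePart' {α : Type*} [Fintype α] (H : SimpleGraph α) (k : ℕ) (hk : Fintype.card α = k)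
    (u : α) (n : ℕ) : ¬ hasCopy (addDom H) (blocksGraph n k) := by
  classical
  rintro ⟨f, hf⟩
  have hk0 : 0 < k := hk ▸ Fintype.card_pos_iff.mpr ⟨u⟩
  set c := (f none).val / k with hc
  have hadj : ∀ a : α, (f (some a)).val / k = c := by
    intro a
    have := f.map_adj (addDom_adj_none' H a)
    rw [blocksGraph_adj'] at this
    exact this.2.symm
  let g : Option α → {z : Fin n // z.val / k = c} := fun p =>
    ⟨f p, by cases p with | none => rfl | some a => exact hadj a⟩
  have hginj : Function.Injective g := fun p q h => hf (congrArg Subtype.val h)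
  have h1 : Fintype.card (Option α) ≤ Fintype.card {z : Fin n // z.val / k = c} :=
    Fintype.card_le_of_injective g hginj
  have h2 : Fintype.card {z : Fin n // z.val / k = c} ≤ k := by
    rw [Fintype.card_subtype]
    have hle : (Finset.filter (fun z : Fin n => z.val / k = c) Finset.univ).card
        ≤ (Finset.range k).card := by
      apply Finset.card_le_card_of_injOn (fun z => z.val % k)
      · intro z hz; simp only [Finset.mem_coe, Finset.mem_range]; exact Nat.mod_lt _ hk0
      · intro z1 hz1 z2 hz2 hmod
        simp only [Finset.coe_filter, Set.mem_setOf_eq] at hz1 hz2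
        have e1 := Nat.div_add_mod z1.val k
        have e2 := Nat.div_add_mod z2.val k
        have hdd : z1.val / k = z2.val / k := by rw [hz1.2, hz2.2]
        rw [hdd] at e1
        have hmod' : (z1 : ℕ) % k = (z2 : ℕ) % k := hmod
        apply Fin.ext
        rw [← e1, hmod']
        exact e2
    simpa using hle
  rw [Fintype.card_option, hk] at h1
  omega

/-- If the `k`-vertex graph `H` has an isolated vertex and either no edges or
`wt(H) > k - 2`, then for any `n >= k + 1` the disjoint union of cliques `q K_k ∪ K_r`
(where `n = q k + r`, `0 <= r < k`) is saturated for `H' = H` plus a dominating vertex. -/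
theorem stmt9 {α : Type*} [Fintype α] (H : SimpleGraph α) (k : ℕ) (hk : Fintype.card α = k)
    (u : α) (hu : ∀ w, ¬ H.Adj u w)
    (hbig : (∀ a b, ¬ H.Adj a b) ∨ k - 2 < graphWt H)
    (n : ℕ) (hn : k + 1 ≤ n) :
    isSat (addDom H) (blocksGraph n k) := by
  constructor
  · exact freePart' H k hk u n
  · intro x y hxy hnadj
    have hdivne : x.val / k ≠ y.val / k := by
      intro h; exact hnadj ((blocksGraph_adj' n k x y).mpr ⟨hxy, h⟩)
    rcases Nat.lt_or_ge (x.val / k) (y.val / k) with h | h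
    · exact key_copy H k hk u hu n x y h
    · have h' : y.val / k < x.val / k := lt_of_le_of_ne h hdivne.symm
      have := key_copy H k hk u hu n y x h'
      rwa [Sym2.eq_swap] at this
end
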